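/- Let Z_1,...,Z_p be independent standard normal random variables and for θ = (θ_1,...,θ_p) with all θ_i > 0 let F(t;θ) be the distribution function of T_θ = Σ_{i=1}^p Z_i²/θ_i. Then for each i and every t > 0, the partial derivative ∂F(t;θ)/∂θ_i is strictly positive. -/

import Mathlib

open MeasureTheory ProbabilityTheory Real

noncomputable def G : ℝ → ℝ := fun u => ((gaussianReal 0 1) {y : ℝ | y ^ 2 ≤ u}).toReal

noncomputable def dG : ℝ → ℝ := fun u =>
  if 0 < u then Real.exp (-u / 2) / Real.sqrt (2 * π * u) else 0

lemma G_mono : Monotone G := by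
  intro a b hab
  exact ENNReal.toReal_mono (measure_ne_top _ _)
    (measure_mono (fun y hy => le_trans hy hab))

lemma G_meas : Measurable G := G_mono.measurable

lemma G_nonneg (u : ℝ) : 0 ≤ G u := ENNReal.toReal_nonneg

lemma G_le_one (u : ℝ) : G u ≤ 1 := by
  have := measure_mono (μ := gaussianReal 0 1) (Set.subset_univ {y : ℝ | y ^ 2 ≤ u})
  simpa [G] using ENNReal.toReal_mono (by simp) this

lemma G_nonpos {u : ℝ} (hu : u ≤ 0) : G u = 0 := by
  have hsub : {y : ℝ | y ^ 2 ≤ u} ⊆ {0} := by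
    intro y hy
    have : y ^ 2 ≤ 0 := le_trans hy hu
    have : y ^ 2 = 0 := le_antisymm this (sq_nonneg y)
    simpa using pow_eq_zero_iff (n := 2) (by norm_num) |>.mp this
  have h0 : (gaussianReal 0 1) {(0:ℝ)} = 0 :=
    gaussianReal_absolutelyContinuous 0 one_ne_zero (by simp)
  have := measure_mono (μ := gaussianReal 0 1) hsub
  simp [G, le_antisymm (h0 ▸ this) (zero_le)]

noncomputable def gphi : ℝ → ℝ := gaussianPDFReal 0 1

lemma gphi_cont : Continuous gphi := by
  unfold gphi gaussianPDFReal
  fun_prop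

lemma gphi_intble : MeasureTheory.Integrable gphi := integrable_gaussianPDFReal 0 1

lemma gphi_even (y : ℝ) : gphi (-y) = gphi y := by
  simp [gphi, gaussianPDFReal, neg_sq]

lemma G_eq_interval {u : ℝ} (hu : 0 ≤ u) :
    G u = ∫ y in (-Real.sqrt u)..(Real.sqrt u), gphi y := by
  have hset : {y : ℝ | y ^ 2 ≤ u} = Set.Icc (-Real.sqrt u) (Real.sqrt u) := by
    ext y
    rw [Set.mem_Icc, ← abs_le]
    constructor
    · intro h
      have := Real.sqrt_le_sqrt h
      rwa [Real.sqrt_sq_eq_abs] at this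
    · intro h
      calc y ^ 2 = |y| ^ 2 := (sq_abs y).symm
        _ ≤ (Real.sqrt u) ^ 2 := pow_le_pow_left₀ (abs_nonneg y) h 2
        _ = u := Real.sq_sqrt hu
  rw [G, hset, gaussianReal_apply_eq_integral 0 one_ne_zero,
    ENNReal.toReal_ofReal (integral_nonneg fun y => gaussianPDFReal_nonneg 0 1 y),
    MeasureTheory.integral_Icc_eq_integral_Ioc,
    ← intervalIntegral.integral_of_le (neg_le_self (Real.sqrt_nonneg u))]
  rfl

lemma hasDerivAt_H (a : ℝ) :
    HasDerivAt (fun a => ∫ y in (-a)..a, gphi y) (2 * gphi a) a := by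
  have hF0 : ∀ c : ℝ, HasDerivAt (fun c => ∫ y in (0:ℝ)..c, gphi y) (gphi c) c := fun c =>
    intervalIntegral.integral_hasDerivAt_right (gphi_intble.intervalIntegrable)
      (gphi_cont.stronglyMeasurable.stronglyMeasurableAtFilter) gphi_cont.continuousAt
  have heq : (fun a : ℝ => ∫ y in (-a)..a, gphi y)
      = fun a => (∫ y in (0:ℝ)..a, gphi y) - ∫ y in (0:ℝ)..(-a), gphi y := by
    funext a
    rw [← intervalIntegral.integral_add_adjacent_intervals
      (gphi_intble.intervalIntegrable) (gphi_intble.intervalIntegrable) (a := -a) (b := 0) (c := a),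
      intervalIntegral.integral_symm]
    ring
  rw [heq]
  have h2 : HasDerivAt (fun a : ℝ => ∫ y in (0:ℝ)..(-a), gphi y) (-gphi (-a)) a := by
    simpa [Function.comp_def] using (hF0 (-a)).comp a (hasDerivAt_neg a)
  have := (hF0 a).sub h2
  simpa [gphi_even, two_mul, Pi.sub_def] using this

lemma hasDerivAt_G {u : ℝ} (hu : 0 < u) : HasDerivAt G (dG u) u := by
  have hsq : HasDerivAt Real.sqrt (1 / (2 * Real.sqrt u)) u := Real.hasDerivAt_sqrt hu.ne'
  have hcomp : HasDerivAt (fun u => ∫ y in (-Real.sqrt u)..(Real.sqrt u), gphi y)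
      (2 * gphi (Real.sqrt u) * (1 / (2 * Real.sqrt u))) u :=
    (hasDerivAt_H (Real.sqrt u)).comp u hsq
  have hGeq : G =ᶠ[nhds u] fun u => ∫ y in (-Real.sqrt u)..(Real.sqrt u), gphi y := by
    filter_upwards [lt_mem_nhds hu] with v hv
    exact G_eq_interval hv.le
  have : HasDerivAt G (2 * gphi (Real.sqrt u) * (1 / (2 * Real.sqrt u))) u :=
    hcomp.congr_of_eventuallyEq hGeq
  convert this using 1
  have hsu : (0:ℝ) < Real.sqrt u := Real.sqrt_pos.mpr hu
  rw [dG, if_pos hu, gphi, gaussianPDFReal]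
  rw [show ((Real.sqrt u - 0) ^ 2 : ℝ) = u by rw [sub_zero, Real.sq_sqrt hu.le]]
  simp only [NNReal.coe_one, mul_one]
  rw [show (2 * π * u : ℝ) = (2 * π) * u by ring, Real.sqrt_mul (by positivity)]
  field_simp

lemma dG_nonneg (u : ℝ) : 0 ≤ dG u := by
  unfold dG; split <;> positivity

lemma dG_pos {u : ℝ} (hu : 0 < u) : 0 < dG u := by
  rw [dG, if_pos hu]; positivity

lemma dG_nonpos {u : ℝ} (hu : u ≤ 0) : dG u = 0 := by
  rw [dG, if_neg (not_lt.mpr hu)]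

lemma dG_meas : Measurable dG := by
  unfold dG
  exact Measurable.ite measurableSet_Ioi (by fun_prop) measurable_const

lemma hasDerivAt_Gmul (c : ℝ) {x : ℝ} (hx : 0 < x) :
    HasDerivAt (fun x => G (x * c)) (c * dG (x * c)) x := by
  rcases lt_trichotomy c 0 with hc | hc | hc
  · have h0 : (fun x : ℝ => G (x * c)) =ᶠ[nhds x] fun _ => (0:ℝ) := by
      filter_upwards [lt_mem_nhds hx] with v hv
      exact G_nonpos (by nlinarith)
    have : HasDerivAt (fun _ : ℝ => (0:ℝ)) 0 x := hasDerivAt_const x 0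
    rw [show c * dG (x * c) = 0 by rw [dG_nonpos (by nlinarith)]; ring]
    exact this.congr_of_eventuallyEq h0
  · subst hc
    simpa using hasDerivAt_const x (G 0)
  · have hxc : 0 < x * c := mul_pos hx hc
    have := (hasDerivAt_G hxc).comp x ((hasDerivAt_id x).mul_const c)
    simpa [mul_comm, Function.comp_def] using this

lemma F'_bound {b c t x : ℝ} (hb : 0 < b) (hx : b ≤ x) (hct : c ≤ t) :
    c * dG (x * c) ≤ Real.sqrt (t / (2 * π * b)) := by
  have hx0 : 0 < x := hb.trans_le hx
  rcases le_or_gt c 0 with hc | hc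
  · rw [dG_nonpos (mul_nonpos_of_nonneg_of_nonpos hx0.le hc), mul_zero]
    positivity
  · have hu : 0 < x * c := mul_pos hx0 hc
    rw [dG, if_pos hu]
    have h1 : c * (Real.exp (-(x * c) / 2) / Real.sqrt (2 * π * (x * c)))
        ≤ c * (1 / Real.sqrt (2 * π * (x * c))) := by
      have : Real.exp (-(x * c) / 2) ≤ 1 := Real.exp_le_one_iff.mpr (by nlinarith)
      have hs : 0 < Real.sqrt (2 * π * (x * c)) := Real.sqrt_pos.mpr (by positivity)
      gcongr
    refine h1.trans ?_
    have key : c * (1 / Real.sqrt (2 * π * (x * c))) = Real.sqrt (c / (2 * π * x)) := by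
      rw [show (2 * π * (x * c) : ℝ) = (2 * π * x) * c by ring,
        Real.sqrt_mul (by positivity), Real.sqrt_div hc.le]
      have h2 : (0:ℝ) < Real.sqrt (2 * π * x) := Real.sqrt_pos.mpr (by positivity)
      have h3 : (0:ℝ) < Real.sqrt c := Real.sqrt_pos.mpr hc
      field_simp
      rw [Real.sq_sqrt hc.le]
    rw [key]
    apply Real.sqrt_le_sqrt
    have ht : 0 < t := hc.trans_le hct
    gcongr

noncomputable def stdGaussianPi' (p : ℕ) : Measure (Fin p → ℝ) :=
  Measure.pi fun _ => gaussianReal 0 1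

lemma Smeas {n : ℕ} (θ : Fin (n+1) → ℝ) (i : Fin (n+1)) :
    Measurable (fun w : Fin n → ℝ => ∑ j, (w j) ^ 2 / θ (i.succAbove j)) := by
  fun_prop

lemma Fcdf_eq_integral (n : ℕ) (θ : Fin (n+1) → ℝ) (i : Fin (n+1)) (t : ℝ) {x : ℝ}
    (hx : 0 < x) :
    ((Measure.pi fun _ : Fin (n+1) => gaussianReal 0 1)
        {z | ∑ k, (z k) ^ 2 / Function.update θ i x k ≤ t}).toReal
      = ∫ w, G (x * (t - ∑ j, (w j) ^ 2 / θ (i.succAbove j)))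
          ∂(Measure.pi fun _ : Fin n => gaussianReal 0 1) := by
  set μ := gaussianReal 0 1 with hμ
  set ν := Measure.pi fun _ : Fin n => gaussianReal 0 1 with hν
  set S : (Fin n → ℝ) → ℝ := fun w => ∑ j, (w j) ^ 2 / θ (i.succAbove j) with hS
  have hSmeas : Measurable S := Smeas θ i
  set B : Set (ℝ × (Fin n → ℝ)) := {yw | yw.1 ^ 2 ≤ x * (t - S yw.2)} with hB
  have hBmeas : MeasurableSet B :=
    measurableSet_le (by fun_prop) (measurable_const.mul (measurable_const.sub
      (hSmeas.comp measurable_snd)))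
  have hpre : (MeasurableEquiv.piFinSuccAbove (fun _ => ℝ) i) ⁻¹' B
      = {z : Fin (n+1) → ℝ | ∑ k, (z k) ^ 2 / Function.update θ i x k ≤ t} := by
    ext z
    simp only [Set.mem_preimage, Set.mem_setOf_eq, hB, MeasurableEquiv.piFinSuccAbove_apply,
      Fin.insertNthEquiv_symm_apply]
    have hsum : ∑ k, (z k) ^ 2 / Function.update θ i x k
        = (z i) ^ 2 / x + S (i.removeNth z) := by
      rw [Fin.sum_univ_succAbove (fun k => (z k) ^ 2 / Function.update θ i x k) i]
      simp only [Function.update_self, hS, Fin.removeNth]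
      congr 1
      exact Finset.sum_congr rfl fun j _ => by
        rw [Function.update_of_ne (Fin.succAbove_ne i j)]
    rw [hsum]
    rw [div_add' _ _ _ hx.ne', div_le_iff₀ hx]
    constructor
    · intro h; nlinarith
    · intro h; nlinarith
  have hkey : (Measure.pi fun _ : Fin (n+1) => μ)
      {z : Fin (n+1) → ℝ | ∑ k, (z k) ^ 2 / Function.update θ i x k ≤ t}
      = (μ.prod ν) B := by
    rw [← hpre]
    exact (measurePreserving_piFinSuccAbove (fun _ : Fin (n+1) => μ) i).measure_preimage
      hBmeas.nullMeasurableSet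
  rw [hkey, Measure.prod_apply_symm hBmeas]
  have hslice : ∀ w, μ ((fun y => (y, w)) ⁻¹' B) = ENNReal.ofReal (G (x * (t - S w))) := by
    intro w
    have : ((fun y => (y, w)) ⁻¹' B) = {y : ℝ | y ^ 2 ≤ x * (t - S w)} := rfl
    rw [this, ← ENNReal.ofReal_toReal (measure_ne_top μ _)]
    rfl
  simp_rw [hslice]
  exact (integral_eq_lintegral_of_nonneg_ae (f := fun w => G (x * (t - S w))) (ae_of_all _ fun w => G_nonneg _)
    ((G_meas.comp (measurable_const.mul (measurable_const.sub hSmeas))).aestronglyMeasurable)).symm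

lemma measure_S_lt_pos (n : ℕ) (θ : Fin (n+1) → ℝ) (hθ : ∀ k, 0 < θ k) (i : Fin (n+1))
    {t : ℝ} (ht : 0 < t) :
    0 < (Measure.pi fun _ : Fin n => gaussianReal 0 1)
      {w | ∑ j, (w j) ^ 2 / θ (i.succAbove j) < t} := by
  set Sig : ℝ := ∑ j : Fin n, 1 / θ (i.succAbove j) with hSig
  have hSig_nonneg : 0 ≤ Sig := Finset.sum_nonneg fun j _ => one_div_nonneg.mpr (hθ _).le
  set δ : ℝ := Real.sqrt (t / (Sig + 1)) with hδdef
  have hδsq : δ ^ 2 = t / (Sig + 1) := Real.sq_sqrt (by positivity)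
  have hδ : 0 < δ := Real.sqrt_pos.mpr (by positivity)
  have hsub : Set.pi Set.univ (fun _ : Fin n => Set.Ioo (-δ) δ)
      ⊆ {w | ∑ j, (w j) ^ 2 / θ (i.succAbove j) < t} := by
    intro w hw
    simp only [Set.mem_pi, Set.mem_univ, Set.mem_Ioo, forall_true_left] at hw
    have hle : ∑ j, (w j) ^ 2 / θ (i.succAbove j) ≤ ∑ j : Fin n, δ ^ 2 / θ (i.succAbove j) := by
      apply Finset.sum_le_sum
      intro j _
      have h1 : (w j) ^ 2 ≤ δ ^ 2 := by
        have := hw j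
        nlinarith [this.1, this.2]
      have := hθ (i.succAbove j)
      gcongr
    have heq : ∑ j : Fin n, δ ^ 2 / θ (i.succAbove j) = δ ^ 2 * Sig := by
      rw [hSig, Finset.mul_sum]
      exact Finset.sum_congr rfl fun j _ => by ring
    have hlt : δ ^ 2 * Sig < t := by
      have : δ ^ 2 * (Sig + 1) = t := by
        rw [hδsq]; field_simp
      nlinarith [sq_nonneg δ]
    simp only [Set.mem_setOf_eq]
    calc ∑ j, (w j) ^ 2 / θ (i.succAbove j) ≤ δ ^ 2 * Sig := heq ▸ hle
      _ < t := hlt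
  refine lt_of_lt_of_le ?_ (measure_mono hsub)
  rw [Measure.pi_pi]
  have hfac : 0 < (gaussianReal 0 1) (Set.Ioo (-δ) δ) := by
    rw [pos_iff_ne_zero]
    intro h
    have hvol : (volume : Measure ℝ) (Set.Ioo (-δ) δ) = 0 :=
      gaussianReal_absolutelyContinuous' 0 one_ne_zero h
    rw [Real.volume_Ioo] at hvol
    simp only [ENNReal.ofReal_eq_zero] at hvol
    linarith
  exact CanonicallyOrderedAdd.prod_pos.mpr fun j _ => hfac


set_option maxHeartbeats 1000000 in
theorem main_thm (p : ℕ) (θ : Fin p → ℝ) (hθ : ∀ i, 0 < θ i)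
    (i : Fin p) (t : ℝ) (ht : 0 < t) :
    0 < deriv (fun x =>
      ((Measure.pi fun _ : Fin p => gaussianReal 0 1)
        {z | ∑ k, (z k) ^ 2 / Function.update θ i x k ≤ t}).toReal) (θ i) := by
  rcases p with _ | n
  · exact i.elim0
  set ν := Measure.pi fun _ : Fin n => gaussianReal 0 1 with hν
  set S : (Fin n → ℝ) → ℝ := fun w => ∑ j, (w j) ^ 2 / θ (i.succAbove j) with hSdef
  have hSmeas : Measurable S := Smeas θ i
  have hS_nonneg : ∀ w, 0 ≤ S w := fun w =>
    Finset.sum_nonneg fun j _ => div_nonneg (sq_nonneg _) (hθ _).le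
  have hθi : 0 < θ i := hθ i
  have hball : ∀ x ∈ Metric.ball (θ i) (θ i / 2), θ i / 2 < x := by
    intro x hx
    rw [Metric.mem_ball, Real.dist_eq, abs_lt] at hx
    linarith [hx.1]
  set F' : ℝ → (Fin n → ℝ) → ℝ := fun x w => (t - S w) * dG (x * (t - S w)) with hF'def
  have hF'nonneg : ∀ (x : ℝ), 0 < x → ∀ w, 0 ≤ F' x w := by
    intro x hx w
    rcases le_or_gt 0 (t - S w) with hc | hc
    · exact mul_nonneg hc (dG_nonneg _)
    · rw [hF'def]
      simp only
      rw [dG_nonpos (mul_nonpos_of_nonneg_of_nonpos hx.le hc.le), mul_zero]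
  have main := hasDerivAt_integral_of_dominated_loc_of_deriv_le
    (μ := ν) (x₀ := θ i) (s := Metric.ball (θ i) (θ i / 2))
    (F := fun x w => G (x * (t - S w))) (F' := F')
    (bound := fun _ => Real.sqrt (t / (2 * π * (θ i / 2))))
    (Metric.ball_mem_nhds _ (half_pos hθi))
    (Filter.Eventually.of_forall fun x =>
      ((G_meas.comp (measurable_const.mul (measurable_const.sub hSmeas))).aestronglyMeasurable))
    (by
      refine (integrable_const (1:ℝ)).mono'
        ((G_meas.comp (measurable_const.mul (measurable_const.sub hSmeas))).aestronglyMeasurable)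
        (ae_of_all _ fun w => ?_)
      rw [Real.norm_eq_abs, abs_of_nonneg (G_nonneg _)]
      exact G_le_one _)
    (((measurable_const.sub hSmeas).mul (dG_meas.comp
      (measurable_const.mul (measurable_const.sub hSmeas)))).aestronglyMeasurable)
    (ae_of_all _ fun w x hx => by
      rw [Real.norm_eq_abs, abs_of_nonneg (hF'nonneg x ((half_pos hθi).trans (hball x hx)) w)]
      exact F'_bound (half_pos hθi) (hball x hx).le (by linarith [hS_nonneg w]))
    (integrable_const _)
    (ae_of_all _ fun w x hx => hasDerivAt_Gmul (t - S w) ((half_pos hθi).trans (hball x hx)))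
  obtain ⟨hF'int, hderiv⟩ := main
  have heq : (fun x => ((Measure.pi fun _ : Fin (n+1) => gaussianReal 0 1)
        {z | ∑ k, (z k) ^ 2 / Function.update θ i x k ≤ t}).toReal)
      =ᶠ[nhds (θ i)] fun x => ∫ w, G (x * (t - S w)) ∂ν := by
    filter_upwards [lt_mem_nhds hθi] with x hx
    exact Fcdf_eq_integral n θ i t hx
  have hd2 : HasDerivAt (fun x => ((Measure.pi fun _ : Fin (n+1) => gaussianReal 0 1)
        {z | ∑ k, (z k) ^ 2 / Function.update θ i x k ≤ t}).toReal)
      (∫ w, F' (θ i) w ∂ν) (θ i) := hderiv.congr_of_eventuallyEq heq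
  rw [hd2.deriv]
  rw [integral_pos_iff_support_of_nonneg_ae (ae_of_all _ (hF'nonneg _ hθi)) hF'int]
  refine lt_of_lt_of_le (measure_S_lt_pos n θ hθ i ht) (measure_mono ?_)
  intro w hw
  have hc : 0 < t - S w := sub_pos.mpr hw
  exact ne_of_gt (mul_pos hc (dG_pos (mul_pos hθi hc)))

/-- Law of a vector of `p` i.i.d. standard normal random variables. -/
noncomputable def stdGaussianPi (p : ℕ) : Measure (Fin p → ℝ) :=
  Measure.pi fun _ => gaussianReal 0 1

/-- `F(t;θ) = P(∑ Z i ^ 2 / θ i ≤ t)` for i.i.d. standard normals `Z i`. -/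
noncomputable def Fcdf (p : ℕ) (θ : Fin p → ℝ) (t : ℝ) : ℝ :=
  (stdGaussianPi p {z | ∑ i, (z i) ^ 2 / θ i ≤ t}).toReal

/-- the partial derivative of `F(t;θ)` in each `θ i` is strictly positive. -/
theorem partial_deriv_Fcdf_pos (p : ℕ) (θ : Fin p → ℝ) (hθ : ∀ i, 0 < θ i)
    (i : Fin p) (t : ℝ) (ht : 0 < t) :
    0 < deriv (fun x => Fcdf p (Function.update θ i x) t) (θ i) := by
  simpa only [Fcdf, stdGaussianPi] using main_thm p θ hθ i t ht
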